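/- Suppose the weighted undirected graph a on n nodes is connected. In the CCR structure, X* ∈ ℝ^{r×p} is a least squares solution to AXB = F if and only if there exist Y_{vi}* ∈ ℝ^{r_i×q}, Z_i* ∈ ℝ^{r×q}, U_i* ∈ ℝ^{m×q}, W_i* ∈ ℝ^{m×q} (i = 1,…,n) such that ((X*,…,X*), Y*, Z*, U*, W*) (with X_i* = X* for every i) is an optimal solution of problem (CCR-opt), i.e., it is feasible and attains the minimum of the objective over the feasible set. -/

import Mathlib

open Matrix

/-- Squared Frobenius norm of a real matrix: `‖M‖_F² = tr (Mᵀ M)`. -/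
noncomputable def frobSq {α β : Type*} [Fintype α] [Fintype β] (M : Matrix α β ℝ) : ℝ :=
  Matrix.trace (Mᵀ * M)

/-- Frobenius inner product of real matrices: `⟨M,N⟩_F = tr (Mᵀ N)`. -/
noncomputable def frobInner {α β : Type*} [Fintype α] [Fintype β] (M N : Matrix α β ℝ) : ℝ :=
  Matrix.trace (Mᵀ * N)

/-- The weighted undirected graph with adjacency matrix `a` is connected: any two nodes are
joined by a path of adjacent nodes (nodes `u ≠ v` are adjacent iff `a u v > 0`). -/
def GraphConnected {n : ℕ} (a : Matrix (Fin n) (Fin n) ℝ) : Prop :=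
  ∀ i j : Fin n, Relation.ReflTransGen (fun u v : Fin n => u ≠ v ∧ 0 < a u v) i j

/-- Assemble a family of row blocks `M i ∈ ℝ^{d i × β}` into one matrix. -/
def blockRows {n : ℕ} {d : Fin n → ℕ} {β : Type*} (M : ∀ i, Matrix (Fin (d i)) β ℝ) :
    Matrix ((i : Fin n) × Fin (d i)) β ℝ :=
  Matrix.of fun s j => M s.1 s.2 j

/-- Assemble a family of column blocks `M i ∈ ℝ^{α × d i}` into one matrix. -/
def blockCols {n : ℕ} {d : Fin n → ℕ} {α : Type*} (M : ∀ i, Matrix α (Fin (d i)) ℝ) :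
    Matrix α ((i : Fin n) × Fin (d i)) ℝ :=
  Matrix.of fun k s => M s.1 k s.2

/-- The `i`-th row block of a matrix whose rows are partitioned according to `d`. -/
def rowBlk {n : ℕ} {d : Fin n → ℕ} {β : Type*}
    (Y : Matrix ((i : Fin n) × Fin (d i)) β ℝ) (i : Fin n) :
    Matrix (Fin (d i)) β ℝ :=
  Matrix.of fun k j => Y ⟨i, k⟩ j

/-- `[M]_R`: the matrix whose `i`-th row block is `M` and whose other row blocks are zero. -/
def embedRow {n : ℕ} {d : Fin n → ℕ} {β : Type*} (i : Fin n)
    (M : Matrix (Fin (d i)) β ℝ) :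
    Matrix ((i' : Fin n) × Fin (d i')) β ℝ :=
  Matrix.of fun s j => if h : s.1 = i then M (Fin.cast (congrArg d h) s.2) j else 0

/-- `[M]_C`: the matrix whose `i`-th column block is `M` and whose other column blocks are zero. -/
def embedCol {n : ℕ} {d : Fin n → ℕ} {α : Type*} (i : Fin n)
    (M : Matrix α (Fin (d i)) ℝ) :
    Matrix α ((i' : Fin n) × Fin (d i')) ℝ :=
  Matrix.of fun k s => if h : s.1 = i then M k (Fin.cast (congrArg d h) s.2) else 0

/-- Feasibility for problem (CCR-opt). -/
def CCRfeas {n p : ℕ} {rdim qdim mdim : Fin n → ℕ}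
    (a : Matrix (Fin n) (Fin n) ℝ)
    (Bl : ∀ i, Matrix (Fin p) (Fin (qdim i)) ℝ)
    (X : Fin n → Matrix ((i : Fin n) × Fin (rdim i)) (Fin p) ℝ)
    (Yv : ∀ i, Matrix (Fin (rdim i)) ((i' : Fin n) × Fin (qdim i')) ℝ)
    (Z : Fin n → Matrix ((i : Fin n) × Fin (rdim i)) ((i' : Fin n) × Fin (qdim i')) ℝ)
    (U W : Fin n → Matrix ((i : Fin n) × Fin (mdim i)) ((i' : Fin n) × Fin (qdim i')) ℝ) :
    Prop :=
  (∀ i j, X i = X j) ∧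
  (∀ i, U i = ∑ j, a i j • (W i - W j)) ∧
  (∀ i, embedRow i (Yv i) - X i * embedCol i (Bl i) - ∑ j, a i j • (Z i - Z j) = 0)

/-- Objective of problem (CCR-opt): `Σ_i ‖A_{li} Y_{vi} − [F_{vi}]_R − U_i‖_F²`. -/
noncomputable def CCRobj {n : ℕ} {rdim qdim mdim : Fin n → ℕ}
    (Al : ∀ i, Matrix ((i' : Fin n) × Fin (mdim i')) (Fin (rdim i)) ℝ)
    (Fv : ∀ i, Matrix (Fin (mdim i)) ((i' : Fin n) × Fin (qdim i')) ℝ)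
    (Yv : ∀ i, Matrix (Fin (rdim i)) ((i' : Fin n) × Fin (qdim i')) ℝ)
    (U : Fin n → Matrix ((i : Fin n) × Fin (mdim i)) ((i' : Fin n) × Fin (qdim i')) ℝ) : ℝ :=
  ∑ i, frobSq (Al i * Yv i - embedRow i (Fv i) - U i)

/-- Right-hand side of the `X_i`-equation in algorithm (CCR-alg). -/
noncomputable def CCRrhsX {n p : ℕ} {rdim qdim : Fin n → ℕ}
    (a : Matrix (Fin n) (Fin n) ℝ)
    (Bl : ∀ i, Matrix (Fin p) (Fin (qdim i)) ℝ)
    (X L1 : Fin n → Matrix ((i : Fin n) × Fin (rdim i)) (Fin p) ℝ)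
    (L3 : Fin n → Matrix ((i : Fin n) × Fin (rdim i)) ((i' : Fin n) × Fin (qdim i')) ℝ)
    (i : Fin n) : Matrix ((i : Fin n) × Fin (rdim i)) (Fin p) ℝ :=
  L3 i * (embedCol i (Bl i))ᵀ - ∑ j, a i j • (L1 i - L1 j) - ∑ j, a i j • (X i - X j)

/-- Right-hand side of the `Y_{vi}`-equation in algorithm (CCR-alg). -/
noncomputable def CCRrhsY {n : ℕ} {rdim qdim mdim : Fin n → ℕ}
    (Al : ∀ i, Matrix ((i' : Fin n) × Fin (mdim i')) (Fin (rdim i)) ℝ)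
    (Fv : ∀ i, Matrix (Fin (mdim i)) ((i' : Fin n) × Fin (qdim i')) ℝ)
    (Yv : ∀ i, Matrix (Fin (rdim i)) ((i' : Fin n) × Fin (qdim i')) ℝ)
    (U : Fin n → Matrix ((i : Fin n) × Fin (mdim i)) ((i' : Fin n) × Fin (qdim i')) ℝ)
    (L3 : Fin n → Matrix ((i : Fin n) × Fin (rdim i)) ((i' : Fin n) × Fin (qdim i')) ℝ)
    (i : Fin n) : Matrix (Fin (rdim i)) ((i' : Fin n) × Fin (qdim i')) ℝ :=
  -((Al i)ᵀ * (Al i * Yv i - embedRow i (Fv i) - U i)) - rowBlk (L3 i) i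

/-- Right-hand side of the `U_i`-equation in algorithm (CCR-alg). -/
noncomputable def CCRrhsU {n : ℕ} {rdim qdim mdim : Fin n → ℕ}
    (Al : ∀ i, Matrix ((i' : Fin n) × Fin (mdim i')) (Fin (rdim i)) ℝ)
    (Fv : ∀ i, Matrix (Fin (mdim i)) ((i' : Fin n) × Fin (qdim i')) ℝ)
    (Yv : ∀ i, Matrix (Fin (rdim i)) ((i' : Fin n) × Fin (qdim i')) ℝ)
    (U L2 : Fin n → Matrix ((i : Fin n) × Fin (mdim i)) ((i' : Fin n) × Fin (qdim i')) ℝ)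
    (i : Fin n) : Matrix ((i : Fin n) × Fin (mdim i)) ((i' : Fin n) × Fin (qdim i')) ℝ :=
  Al i * Yv i - embedRow i (Fv i) - U i - L2 i

/-- Right-hand side of the `W_i`-equation in algorithm (CCR-alg). -/
noncomputable def CCRrhsW {n : ℕ} {qdim mdim : Fin n → ℕ}
    (a : Matrix (Fin n) (Fin n) ℝ)
    (L2 : Fin n → Matrix ((i : Fin n) × Fin (mdim i)) ((i' : Fin n) × Fin (qdim i')) ℝ)
    (i : Fin n) : Matrix ((i : Fin n) × Fin (mdim i)) ((i' : Fin n) × Fin (qdim i')) ℝ :=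
  ∑ j, a i j • (L2 i - L2 j)

/-- Right-hand side of the `Z_i`-equation in algorithm (CCR-alg). -/
noncomputable def CCRrhsZ {n : ℕ} {rdim qdim : Fin n → ℕ}
    (a : Matrix (Fin n) (Fin n) ℝ)
    (L3 : Fin n → Matrix ((i : Fin n) × Fin (rdim i)) ((i' : Fin n) × Fin (qdim i')) ℝ)
    (i : Fin n) : Matrix ((i : Fin n) × Fin (rdim i)) ((i' : Fin n) × Fin (qdim i')) ℝ :=
  ∑ j, a i j • (L3 i - L3 j)

/-- Right-hand side of the `Λ¹_i`-equation in algorithm (CCR-alg). -/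
noncomputable def CCRrhsL1 {n p : ℕ} {rdim : Fin n → ℕ}
    (a : Matrix (Fin n) (Fin n) ℝ)
    (X : Fin n → Matrix ((i : Fin n) × Fin (rdim i)) (Fin p) ℝ)
    (i : Fin n) : Matrix ((i : Fin n) × Fin (rdim i)) (Fin p) ℝ :=
  ∑ j, a i j • (X i - X j)

/-- Right-hand side of the `Λ²_i`-equation in algorithm (CCR-alg), with the derivative
feedback replaced by the right-hand side that determines it. -/
noncomputable def CCRrhsL2 {n : ℕ} {rdim qdim mdim : Fin n → ℕ}
    (a : Matrix (Fin n) (Fin n) ℝ)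
    (Al : ∀ i, Matrix ((i' : Fin n) × Fin (mdim i')) (Fin (rdim i)) ℝ)
    (Fv : ∀ i, Matrix (Fin (mdim i)) ((i' : Fin n) × Fin (qdim i')) ℝ)
    (Yv : ∀ i, Matrix (Fin (rdim i)) ((i' : Fin n) × Fin (qdim i')) ℝ)
    (U W L2 : Fin n → Matrix ((i : Fin n) × Fin (mdim i)) ((i' : Fin n) × Fin (qdim i')) ℝ)
    (i : Fin n) : Matrix ((i : Fin n) × Fin (mdim i)) ((i' : Fin n) × Fin (qdim i')) ℝ :=
  U i + CCRrhsU Al Fv Yv U L2 i - ∑ j, a i j • (W i - W j) - ∑ j, a i j • (L2 i - L2 j)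

/-- Right-hand side of the `Λ³_i`-equation in algorithm (CCR-alg), with the derivative
feedback replaced by the right-hand side that determines it. -/
noncomputable def CCRrhsL3 {n p : ℕ} {rdim qdim mdim : Fin n → ℕ}
    (a : Matrix (Fin n) (Fin n) ℝ)
    (Al : ∀ i, Matrix ((i' : Fin n) × Fin (mdim i')) (Fin (rdim i)) ℝ)
    (Bl : ∀ i, Matrix (Fin p) (Fin (qdim i)) ℝ)
    (Fv : ∀ i, Matrix (Fin (mdim i)) ((i' : Fin n) × Fin (qdim i')) ℝ)
    (X : Fin n → Matrix ((i : Fin n) × Fin (rdim i)) (Fin p) ℝ)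
    (Yv : ∀ i, Matrix (Fin (rdim i)) ((i' : Fin n) × Fin (qdim i')) ℝ)
    (Z : Fin n → Matrix ((i : Fin n) × Fin (rdim i)) ((i' : Fin n) × Fin (qdim i')) ℝ)
    (U L2 : Fin n → Matrix ((i : Fin n) × Fin (mdim i)) ((i' : Fin n) × Fin (qdim i')) ℝ)
    (L3 : Fin n → Matrix ((i : Fin n) × Fin (rdim i)) ((i' : Fin n) × Fin (qdim i')) ℝ)
    (i : Fin n) : Matrix ((i : Fin n) × Fin (rdim i)) ((i' : Fin n) × Fin (qdim i')) ℝ :=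
  embedRow i (Yv i) + embedRow i (CCRrhsY Al Fv Yv U L3 i)
    - X i * embedCol i (Bl i) - ∑ j, a i j • (Z i - Z j) - ∑ j, a i j • (L3 i - L3 j)

/-- Equilibrium of algorithm (CCR-alg): all right-hand sides vanish. -/
noncomputable def CCRequil {n p : ℕ} {rdim qdim mdim : Fin n → ℕ}
    (a : Matrix (Fin n) (Fin n) ℝ)
    (Al : ∀ i, Matrix ((i' : Fin n) × Fin (mdim i')) (Fin (rdim i)) ℝ)
    (Bl : ∀ i, Matrix (Fin p) (Fin (qdim i)) ℝ)
    (Fv : ∀ i, Matrix (Fin (mdim i)) ((i' : Fin n) × Fin (qdim i')) ℝ)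
    (X : Fin n → Matrix ((i : Fin n) × Fin (rdim i)) (Fin p) ℝ)
    (Yv : ∀ i, Matrix (Fin (rdim i)) ((i' : Fin n) × Fin (qdim i')) ℝ)
    (Z : Fin n → Matrix ((i : Fin n) × Fin (rdim i)) ((i' : Fin n) × Fin (qdim i')) ℝ)
    (U W : Fin n → Matrix ((i : Fin n) × Fin (mdim i)) ((i' : Fin n) × Fin (qdim i')) ℝ)
    (L1 : Fin n → Matrix ((i : Fin n) × Fin (rdim i)) (Fin p) ℝ)
    (L2 : Fin n → Matrix ((i : Fin n) × Fin (mdim i)) ((i' : Fin n) × Fin (qdim i')) ℝ)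
    (L3 : Fin n → Matrix ((i : Fin n) × Fin (rdim i)) ((i' : Fin n) × Fin (qdim i')) ℝ) :
    Prop :=
  ∀ i, CCRrhsX a Bl X L1 L3 i = 0 ∧ CCRrhsY Al Fv Yv U L3 i = 0 ∧
    CCRrhsU Al Fv Yv U L2 i = 0 ∧ CCRrhsW a L2 i = 0 ∧ CCRrhsZ a L3 i = 0 ∧
    CCRrhsL1 a X i = 0 ∧ CCRrhsL2 a Al Fv Yv U W L2 i = 0 ∧
    CCRrhsL3 a Al Bl Fv X Yv Z U L2 L3 i = 0


section AuxProof
open Finset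

section Lap
variable {n : ℕ} (a : Matrix (Fin n) (Fin n) ℝ)

noncomputable def lapL : (Fin n → ℝ) →ₗ[ℝ] (Fin n → ℝ) :=
  (Matrix.diagonal (fun i => ∑ j, a i j) - a).mulVecLin

lemma lapL_apply (w : Fin n → ℝ) (i : Fin n) :
    lapL a w i = ∑ j, a i j * (w i - w j) := by
  simp only [lapL, Matrix.mulVecLin_apply, Matrix.mulVec, dotProduct,
    Matrix.sub_apply, Matrix.diagonal_apply, sub_mul, ite_mul, zero_mul,
    Finset.sum_sub_distrib, Finset.sum_ite_eq, Finset.mem_univ, if_true,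
    mul_sub, Finset.sum_mul]

noncomputable def sumLin : (Fin n → ℝ) →ₗ[ℝ] ℝ := ∑ i : Fin n, LinearMap.proj i

lemma sumLin_apply (w : Fin n → ℝ) : sumLin (n := n) w = ∑ i, w i := by
  simp [sumLin]

end Lap

section Lap2
variable {n : ℕ} {a : Matrix (Fin n) (Fin n) ℝ}

lemma lap_sum_zero_real (hsym : ∀ i j, a i j = a j i) (w : Fin n → ℝ) :
    ∑ i, lapL a w i = 0 := by
  simp only [lapL_apply, mul_sub, Finset.sum_sub_distrib]
  rw [sub_eq_zero, Finset.sum_comm]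
  apply Finset.sum_congr rfl; intro i _
  apply Finset.sum_congr rfl; intro j _
  rw [hsym]

lemma energy_identity (hsym : ∀ i j, a i j = a j i) (w : Fin n → ℝ) :
    ∑ i, ∑ j, a i j * (w i - w j)^2 = 2 * ∑ i, w i * lapL a w i := by
  have swap : ∑ i, ∑ j, a i j * (w i - w j) * w j
      = - ∑ i, ∑ j, a i j * (w i - w j) * w i := by
    rw [Finset.sum_comm, ← Finset.sum_neg_distrib]
    apply Finset.sum_congr rfl; intro i _
    rw [← Finset.sum_neg_distrib]
    apply Finset.sum_congr rfl; intro j _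
    rw [hsym j i]; ring
  have expand : ∑ i, ∑ j, a i j * (w i - w j)^2
      = (∑ i, ∑ j, a i j * (w i - w j) * w i) - ∑ i, ∑ j, a i j * (w i - w j) * w j := by
    rw [← Finset.sum_sub_distrib]
    apply Finset.sum_congr rfl; intro i _
    rw [← Finset.sum_sub_distrib]
    apply Finset.sum_congr rfl; intro j _
    ring
  rw [expand, swap, sub_neg_eq_add, two_mul]
  simp only [lapL_apply]
  congr 1 <;>
  · apply Finset.sum_congr rfl; intro i _
    rw [Finset.mul_sum]
    apply Finset.sum_congr rfl; intro j _
    ring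

lemma ker_lap_const (hn : 0 < n) (hsym : ∀ i j, a i j = a j i)
    (hnonneg : ∀ i j, 0 ≤ a i j) (hconn : GraphConnected a)
    (w : Fin n → ℝ) (hw : lapL a w = 0) : ∀ i j, w i = w j := by
  have hE : ∑ i, ∑ j, a i j * (w i - w j)^2 = 0 := by
    rw [energy_identity hsym]
    simp [hw]
  have hterm : ∀ i j, a i j * (w i - w j)^2 = 0 := by
    have h1 := (Finset.sum_eq_zero_iff_of_nonneg (fun i _ =>
      Finset.sum_nonneg (fun j _ => mul_nonneg (hnonneg i j) (sq_nonneg _)))).mp hE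
    intro i j
    have h2 := (Finset.sum_eq_zero_iff_of_nonneg (fun j _ =>
      mul_nonneg (hnonneg i j) (sq_nonneg _))).mp (h1 i (Finset.mem_univ i)) j (Finset.mem_univ j)
    exact h2
  have hadj : ∀ u v : Fin n, (u ≠ v ∧ 0 < a u v) → w u = w v := by
    intro u v ⟨_, hpos⟩
    have := hterm u v
    have h3 : (w u - w v)^2 = 0 := by
      rcases mul_eq_zero.mp this with h | h
      · exact absurd h (ne_of_gt hpos)
      · exact h
    have := pow_eq_zero_iff (n := 2) (by norm_num) |>.mp h3
    linarith [sub_eq_zero.mp this]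
  intro i j
  induction hconn i j with
  | refl => rfl
  | tail _ hadj' ih => exact ih.trans (hadj _ _ hadj')

lemma lap_surj_scalar (hn : 0 < n) (hsym : ∀ i j, a i j = a j i)
    (hnonneg : ∀ i j, 0 ≤ a i j) (hconn : GraphConnected a)
    (v : Fin n → ℝ) (hv : ∑ i, v i = 0) :
    ∃ w : Fin n → ℝ, ∀ i, ∑ j, a i j * (w i - w j) = v i := by
  have hfr : Module.finrank ℝ (Fin n → ℝ) = n := by
    simp [Module.finrank_pi]
  have hsum_surj : Function.Surjective (sumLin (n := n)) := by
    intro x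
    refine ⟨fun i => if i = ⟨0, hn⟩ then x else 0, ?_⟩
    simp [sumLin_apply]
  have hker_sum : Module.finrank ℝ (LinearMap.ker (sumLin (n := n))) = n - 1 := by
    have h1 := LinearMap.finrank_range_add_finrank_ker (sumLin (n := n))
    rw [LinearMap.range_eq_top.mpr hsum_surj, finrank_top, hfr] at h1
    have : Module.finrank ℝ ℝ = 1 := Module.finrank_self ℝ
    omega
  have hone : (fun _ : Fin n => (1:ℝ)) ≠ 0 := by
    intro h
    have := congrFun h ⟨0, hn⟩
    simp at this
  have hkerle : Module.finrank ℝ (LinearMap.ker (lapL a)) ≤ 1 := by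
    have hle : LinearMap.ker (lapL a) ≤ Submodule.span ℝ {fun _ : Fin n => (1:ℝ)} := by
      intro w hw
      rw [LinearMap.mem_ker] at hw
      have hc := ker_lap_const hn hsym hnonneg hconn w hw
      rw [Submodule.mem_span_singleton]
      exact ⟨w ⟨0, hn⟩, by funext i; simp [hc ⟨0, hn⟩ i]⟩
    calc Module.finrank ℝ (LinearMap.ker (lapL a))
        ≤ Module.finrank ℝ (Submodule.span ℝ {fun _ : Fin n => (1:ℝ)}) :=
          Submodule.finrank_mono hle
      _ = 1 := finrank_span_singleton hone
  have hrange : LinearMap.range (lapL a) = LinearMap.ker (sumLin (n := n)) := by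
    apply Submodule.eq_of_le_of_finrank_le
    · rintro _ ⟨w, rfl⟩
      rw [LinearMap.mem_ker, sumLin_apply]
      exact lap_sum_zero_real hsym w
    · have h2 := LinearMap.finrank_range_add_finrank_ker (lapL a)
      rw [hfr] at h2
      omega
  have hvmem : v ∈ LinearMap.range (lapL a) := by
    rw [hrange, LinearMap.mem_ker, sumLin_apply]
    exact hv
  obtain ⟨w, hw⟩ := hvmem
  exact ⟨w, fun i => by rw [← lapL_apply, hw]⟩
end Lap2

section Struct
variable {n : ℕ} {a : Matrix (Fin n) (Fin n) ℝ}

lemma lap_surj_mat {α β : Type*} [Fintype α] [Fintype β]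
    (hn : 0 < n) (hsym : ∀ i j, a i j = a j i)
    (hnonneg : ∀ i j, 0 ≤ a i j) (hconn : GraphConnected a)
    (V : Fin n → Matrix α β ℝ) (hV : ∑ i, V i = 0) :
    ∃ W : Fin n → Matrix α β ℝ, ∀ i, ∑ j, a i j • (W i - W j) = V i := by
  have hst : ∀ s t, ∑ i, V i s t = 0 := by
    intro s t
    have := congrFun (congrFun hV s) t
    simpa [Matrix.sum_apply] using this
  choose w hw using fun s t =>
    lap_surj_scalar hn hsym hnonneg hconn (fun i => V i s t) (hst s t)
  refine ⟨fun i => Matrix.of fun s t => w s t i, fun i => ?_⟩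
  ext s t
  simpa [Matrix.sum_apply, Matrix.sub_apply, mul_sub] using hw s t i

lemma lap_sum_zero {M : Type*} [AddCommGroup M] [Module ℝ M]
    (hsym : ∀ i j, a i j = a j i) (Z : Fin n → M) :
    ∑ i, ∑ j, a i j • (Z i - Z j) = 0 := by
  simp only [smul_sub, Finset.sum_sub_distrib]
  rw [sub_eq_zero, Finset.sum_comm]
  apply Finset.sum_congr rfl; intro i _
  apply Finset.sum_congr rfl; intro j _
  rw [hsym j i]

variable {rdim qdim mdim : Fin n → ℕ} {β γ : Type*} [Fintype β] [Fintype γ]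

lemma sum_sigma_fin {d : Fin n → ℕ} (f : ((i : Fin n) × Fin (d i)) → ℝ) :
    ∑ s, f s = ∑ i, ∑ k, f ⟨i, k⟩ := by
  rw [← Finset.univ_sigma_univ, Finset.sum_sigma]

lemma blockCols_mul_embedRow {d : Fin n → ℕ} (Al : ∀ i, Matrix γ (Fin (d i)) ℝ)
    (i : Fin n) (M : Matrix (Fin (d i)) β ℝ) :
    blockCols Al * embedRow i M = Al i * M := by
  ext s t
  rw [Matrix.mul_apply, Matrix.mul_apply, sum_sigma_fin]
  rw [Finset.sum_eq_single i]
  · simp [blockCols, embedRow]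
  · intro j _ hj
    simp [blockCols, embedRow, hj]
  · simp

lemma sum_embedRow {d : Fin n → ℕ} (M : ∀ i, Matrix (Fin (d i)) β ℝ) :
    ∑ i, embedRow i (M i) = blockRows M := by
  ext s t
  rw [Matrix.sum_apply]
  obtain ⟨j, k⟩ := s
  rw [Finset.sum_eq_single j]
  · simp [embedRow, blockRows]
  · intro i _ hi
    simp [embedRow, Ne.symm hi]
  · simp

lemma blockRows_rowBlk {d : Fin n → ℕ} (Q : Matrix ((i : Fin n) × Fin (d i)) β ℝ) :
    blockRows (fun i => rowBlk Q i) = Q := by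
  ext ⟨j, k⟩ t
  rfl

lemma sum_embedCol {d : Fin n → ℕ} {α : Type*} (M : ∀ i, Matrix α (Fin (d i)) ℝ) :
    ∑ i, embedCol i (M i) = blockCols M := by
  ext s t
  rw [Matrix.sum_apply]
  obtain ⟨j, k⟩ := t
  rw [Finset.sum_eq_single j]
  · simp [embedCol, blockCols]
  · intro i _ hi
    simp [embedCol, Ne.symm hi]
  · simp

lemma frobSq_eq_sum {α : Type*} [Fintype α] (M : Matrix α β ℝ) :
    frobSq M = ∑ t, ∑ s, (M s t)^2 := by
  simp [frobSq, Matrix.trace, Matrix.diag, Matrix.mul_apply, sq]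

lemma frobSq_nonneg {α : Type*} [Fintype α] (M : Matrix α β ℝ) : 0 ≤ frobSq M := by
  rw [frobSq_eq_sum]
  exact Finset.sum_nonneg fun t _ => Finset.sum_nonneg fun s _ => sq_nonneg _

lemma frobSq_smul {α : Type*} [Fintype α] (c : ℝ) (M : Matrix α β ℝ) :
    frobSq (c • M) = c^2 * frobSq M := by
  simp only [frobSq_eq_sum, Matrix.smul_apply, smul_eq_mul, mul_pow, Finset.mul_sum]

lemma frobSq_sum_le {α : Type*} [Fintype α] (E : Fin n → Matrix α β ℝ) :
    frobSq (∑ i, E i) ≤ (n : ℝ) * ∑ i, frobSq (E i) := by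
  simp only [frobSq_eq_sum, Matrix.sum_apply]
  calc ∑ t, ∑ s, (∑ i, E i s t)^2
      ≤ ∑ t, ∑ s, ((n : ℝ) * ∑ i, (E i s t)^2) := by
        apply Finset.sum_le_sum; intro t _
        apply Finset.sum_le_sum; intro s _
        simpa using sq_sum_le_card_mul_sum_sq (s := Finset.univ) (f := fun i => E i s t)
    _ = (n : ℝ) * ∑ i, ∑ t, ∑ s, (E i s t)^2 := by
        simp only [← Finset.mul_sum]
        congr 1
        calc ∑ t : β, ∑ s : α, ∑ i, (E i s t)^2
            = ∑ t : β, ∑ i, ∑ s : α, (E i s t)^2 :=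
              Finset.sum_congr rfl fun t _ => Finset.sum_comm
          _ = ∑ i, ∑ t : β, ∑ s : α, (E i s t)^2 := Finset.sum_comm

end Struct

section Main
variable {n p : ℕ} {rdim qdim mdim : Fin n → ℕ} {a : Matrix (Fin n) (Fin n) ℝ}

lemma feasLB (hn : 0 < n) (hsym : ∀ i j, a i j = a j i)
    (Al : ∀ i, Matrix ((i' : Fin n) × Fin (mdim i')) (Fin (rdim i)) ℝ)
    (Bl : ∀ i, Matrix (Fin p) (Fin (qdim i)) ℝ)
    (Fv : ∀ i, Matrix (Fin (mdim i)) ((i' : Fin n) × Fin (qdim i')) ℝ)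
    (X : Fin n → Matrix ((i : Fin n) × Fin (rdim i)) (Fin p) ℝ)
    (Yv : ∀ i, Matrix (Fin (rdim i)) ((i' : Fin n) × Fin (qdim i')) ℝ)
    (Z : Fin n → Matrix ((i : Fin n) × Fin (rdim i)) ((i' : Fin n) × Fin (qdim i')) ℝ)
    (U W : Fin n → Matrix ((i : Fin n) × Fin (mdim i)) ((i' : Fin n) × Fin (qdim i')) ℝ)
    (hfeas : CCRfeas a Bl X Yv Z U W) :
    frobSq (blockCols Al * X ⟨0, hn⟩ * blockCols Bl - blockRows Fv) ≤
      (n : ℝ) * CCRobj Al Fv Yv U := by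
  obtain ⟨hX, hU, hYZ⟩ := hfeas
  set i0 : Fin n := ⟨0, hn⟩
  have hE : ∑ i, (Al i * Yv i - embedRow i (Fv i) - U i)
      = blockCols Al * X i0 * blockCols Bl - blockRows Fv := by
    have h1 : ∀ i, embedRow i (Yv i)
        = X i0 * embedCol i (Bl i) + ∑ j, a i j • (Z i - Z j) := by
      intro i
      have h := hYZ i
      rw [sub_sub, sub_eq_zero] at h
      rw [h, hX i i0]
    have h2 : ∑ i, embedRow i (Yv i) = X i0 * blockCols Bl := by
      calc ∑ i, embedRow i (Yv i)
          = ∑ i, (X i0 * embedCol i (Bl i) + ∑ j, a i j • (Z i - Z j)) :=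
            Finset.sum_congr rfl fun i _ => h1 i
        _ = (∑ i, X i0 * embedCol i (Bl i)) + ∑ i, ∑ j, a i j • (Z i - Z j) :=
            Finset.sum_add_distrib
        _ = X i0 * blockCols Bl := by
            rw [lap_sum_zero hsym, add_zero, ← Matrix.mul_sum, sum_embedCol]
    have h3 : ∑ i, U i = 0 := by
      calc ∑ i, U i = ∑ i, ∑ j, a i j • (W i - W j) :=
            Finset.sum_congr rfl fun i _ => hU i
        _ = 0 := lap_sum_zero hsym W
    calc ∑ i, (Al i * Yv i - embedRow i (Fv i) - U i)
        = (∑ i, Al i * Yv i) - (∑ i, embedRow i (Fv i)) - ∑ i, U i := by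
          rw [← Finset.sum_sub_distrib, ← Finset.sum_sub_distrib]
      _ = blockCols Al * X i0 * blockCols Bl - blockRows Fv := by
          rw [h3, sub_zero, sum_embedRow]
          congr 1
          calc ∑ i, Al i * Yv i = ∑ i, blockCols Al * embedRow i (Yv i) :=
                Finset.sum_congr rfl fun i _ => (blockCols_mul_embedRow Al i (Yv i)).symm
            _ = blockCols Al * (X i0 * blockCols Bl) := by rw [← Matrix.mul_sum, h2]
            _ = blockCols Al * X i0 * blockCols Bl := by rw [Matrix.mul_assoc]
  calc frobSq (blockCols Al * X i0 * blockCols Bl - blockRows Fv)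
      = frobSq (∑ i, (Al i * Yv i - embedRow i (Fv i) - U i)) := by rw [hE]
    _ ≤ (n : ℝ) * ∑ i, frobSq (Al i * Yv i - embedRow i (Fv i) - U i) := frobSq_sum_le _
    _ = (n : ℝ) * CCRobj Al Fv Yv U := rfl

lemma feasAch (hn : 0 < n) (hsym : ∀ i j, a i j = a j i)
    (hnonneg : ∀ i j, 0 ≤ a i j) (hconn : GraphConnected a)
    (Al : ∀ i, Matrix ((i' : Fin n) × Fin (mdim i')) (Fin (rdim i)) ℝ)
    (Bl : ∀ i, Matrix (Fin p) (Fin (qdim i)) ℝ)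
    (Fv : ∀ i, Matrix (Fin (mdim i)) ((i' : Fin n) × Fin (qdim i')) ℝ)
    (X : Matrix ((i : Fin n) × Fin (rdim i)) (Fin p) ℝ) :
    ∃ Yv Z U W, CCRfeas a Bl (fun _ => X) Yv Z U W ∧
      (n : ℝ) * CCRobj Al Fv Yv U
        = frobSq (blockCols Al * X * blockCols Bl - blockRows Fv) := by
  set Q := X * blockCols Bl with hQdef
  set Yv : ∀ i, Matrix (Fin (rdim i)) ((i' : Fin n) × Fin (qdim i')) ℝ :=
    fun i => rowBlk Q i with hYvdef
  have hQ : ∑ i, embedRow i (Yv i) = Q := by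
    rw [hYvdef, sum_embedRow, blockRows_rowBlk]
  set M : Fin n → Matrix ((i : Fin n) × Fin (rdim i)) ((i' : Fin n) × Fin (qdim i')) ℝ :=
    fun i => embedRow i (Yv i) - X * embedCol i (Bl i) with hMdef
  have hMsum : ∑ i, M i = 0 := by
    rw [hMdef]
    rw [Finset.sum_sub_distrib, hQ, ← Matrix.mul_sum, sum_embedCol, ← hQdef, sub_self]
  obtain ⟨Z, hZ⟩ := lap_surj_mat hn hsym hnonneg hconn M hMsum
  set G := blockCols Al * X * blockCols Bl - blockRows Fv with hGdef
  set C : Fin n → Matrix ((i : Fin n) × Fin (mdim i)) ((i' : Fin n) × Fin (qdim i')) ℝ :=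
    fun i => Al i * Yv i - embedRow i (Fv i) with hCdef
  have hCsum : ∑ i, C i = G := by
    rw [hCdef, hGdef, Finset.sum_sub_distrib, sum_embedRow]
    congr 1
    calc ∑ i, Al i * Yv i = ∑ i, blockCols Al * embedRow i (Yv i) :=
          Finset.sum_congr rfl fun i _ => (blockCols_mul_embedRow Al i (Yv i)).symm
      _ = blockCols Al * Q := by rw [← Matrix.mul_sum, hQ]
      _ = blockCols Al * X * blockCols Bl := by rw [hQdef, Matrix.mul_assoc]
  set U : Fin n → Matrix ((i : Fin n) × Fin (mdim i)) ((i' : Fin n) × Fin (qdim i')) ℝ :=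
    fun i => C i - (n : ℝ)⁻¹ • G with hUdef
  have hnne : (n : ℝ) ≠ 0 := Nat.cast_ne_zero.mpr hn.ne'
  have hUsum : ∑ i, U i = 0 := by
    rw [hUdef, Finset.sum_sub_distrib, hCsum, Finset.sum_const, Finset.card_univ,
      Fintype.card_fin, ← Nat.cast_smul_eq_nsmul ℝ, smul_smul, mul_inv_cancel₀ hnne,
      one_smul, sub_self]
  obtain ⟨W, hW⟩ := lap_surj_mat hn hsym hnonneg hconn U hUsum
  refine ⟨Yv, Z, U, W, ⟨fun i j => rfl, fun i => (hW i).symm, fun i => ?_⟩, ?_⟩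
  · rw [hZ i]
    exact sub_self (M i)
  · have hobj : CCRobj Al Fv Yv U = (n : ℝ) * (((n : ℝ)⁻¹)^2 * frobSq G) := by
      unfold CCRobj
      have : ∀ i, Al i * Yv i - embedRow i (Fv i) - U i = (n : ℝ)⁻¹ • G := by
        intro i
        rw [hUdef]
        simp [hCdef]
      calc ∑ i, frobSq (Al i * Yv i - embedRow i (Fv i) - U i)
          = ∑ i : Fin n, frobSq ((n : ℝ)⁻¹ • G) :=
            Finset.sum_congr rfl fun i _ => by rw [this i]
        _ = (n : ℝ) * (((n : ℝ)⁻¹)^2 * frobSq G) := by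
            rw [frobSq_smul, Finset.sum_const, Finset.card_univ, Fintype.card_fin,
              nsmul_eq_mul]
    rw [hobj]
    field_simp

end Main

end AuxProof

theorem stmt_11 (n p : ℕ) (hn : 0 < n) (rdim qdim mdim : Fin n → ℕ)
    (a : Matrix (Fin n) (Fin n) ℝ)
    (hsym : ∀ i j, a i j = a j i) (hnonneg : ∀ i j, 0 ≤ a i j)
    (hdiag : ∀ i, a i i = 0) (hconn : GraphConnected a)
    (Al : ∀ i, Matrix ((i' : Fin n) × Fin (mdim i')) (Fin (rdim i)) ℝ)
    (Bl : ∀ i, Matrix (Fin p) (Fin (qdim i)) ℝ)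
    (Fv : ∀ i, Matrix (Fin (mdim i)) ((i' : Fin n) × Fin (qdim i')) ℝ)
    (Xs : Matrix ((i : Fin n) × Fin (rdim i)) (Fin p) ℝ) :
    (∀ X' : Matrix ((i : Fin n) × Fin (rdim i)) (Fin p) ℝ,
        frobSq (blockCols Al * Xs * blockCols Bl - blockRows Fv) ≤
          frobSq (blockCols Al * X' * blockCols Bl - blockRows Fv)) ↔
      (∃ Yv : ∀ i, Matrix (Fin (rdim i)) ((i' : Fin n) × Fin (qdim i')) ℝ,
        ∃ Z : Fin n → Matrix ((i : Fin n) × Fin (rdim i)) ((i' : Fin n) × Fin (qdim i')) ℝ,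
          ∃ U W : Fin n → Matrix ((i : Fin n) × Fin (mdim i)) ((i' : Fin n) × Fin (qdim i')) ℝ,
            CCRfeas a Bl (fun _ => Xs) Yv Z U W ∧
              ∀ X' : Fin n → Matrix ((i : Fin n) × Fin (rdim i)) (Fin p) ℝ,
                ∀ Yv' : ∀ i, Matrix (Fin (rdim i)) ((i' : Fin n) × Fin (qdim i')) ℝ,
                  ∀ Z' : Fin n → Matrix ((i : Fin n) × Fin (rdim i)) ((i' : Fin n) × Fin (qdim i')) ℝ,
                    ∀ U' W' : Fin n → Matrix ((i : Fin n) × Fin (mdim i)) ((i' : Fin n) × Fin (qdim i')) ℝ,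
                      CCRfeas a Bl X' Yv' Z' U' W' →
                        CCRobj Al Fv Yv U ≤ CCRobj Al Fv Yv' U') := by
  constructor
  · intro hmin
    obtain ⟨Yv, Z, U, W, hfeas, hval⟩ := feasAch hn hsym hnonneg hconn Al Bl Fv Xs
    refine ⟨Yv, Z, U, W, hfeas, ?_⟩
    intro X' Yv' Z' U' W' hfeas'
    have h1 := feasLB hn hsym Al Bl Fv X' Yv' Z' U' W' hfeas'
    have h2 := hmin (X' ⟨0, hn⟩)
    have h3 : (n : ℝ) * CCRobj Al Fv Yv U ≤ (n : ℝ) * CCRobj Al Fv Yv' U' := by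
      rw [hval]
      exact h2.trans h1
    exact le_of_mul_le_mul_left h3 (by exact_mod_cast hn)
  · rintro ⟨Yv, Z, U, W, hfeas, hopt⟩
    intro X'
    obtain ⟨Yv2, Z2, U2, W2, hfeas2, hval2⟩ := feasAch hn hsym hnonneg hconn Al Bl Fv X'
    have h1 := feasLB hn hsym Al Bl Fv (fun _ => Xs) Yv Z U W hfeas
    have h2 := hopt (fun _ => X') Yv2 Z2 U2 W2 hfeas2
    calc frobSq (blockCols Al * Xs * blockCols Bl - blockRows Fv)
        ≤ (n : ℝ) * CCRobj Al Fv Yv U := h1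
      _ ≤ (n : ℝ) * CCRobj Al Fv Yv2 U2 :=
          mul_le_mul_of_nonneg_left h2 (Nat.cast_nonneg n)
      _ = frobSq (blockCols Al * X' * blockCols Bl - blockRows Fv) := hval2
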